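/- arXiv:2605.20868 — 3 statements merged into one kernel-verified Lean document; each statement's English description precedes it below -/
import Mathlib

section
/- Let a and a' be softmax distributions of logit vectors s and s' over {1,...,N} with |s_t - s'_t| ≤ Δ for all t. Then the total variation distance TV(a,a') = (1/2) Σ_t |a_t - a'_t| satisfies TV(a,a') ≤ tanh(Δ) = (e^{2Δ} - 1)/(e^{2Δ} + 1). -/
open Real Finset

lemma tanh_eq_aux (Δ : ℝ) :
    Real.tanh Δ = (Real.exp (2 * Δ) - 1) / (Real.exp (2 * Δ) + 1) := by
  rw [Real.tanh_eq_sinh_div_cosh, Real.sinh_eq, Real.cosh_eq, two_mul, Real.exp_add,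
    Real.exp_neg]
  have h1 : Real.exp Δ ≠ 0 := Real.exp_ne_zero _
  field_simp

/-- Total-variation bound for perturbed softmax: `TV(a,a') ≤ tanh Δ`. -/
theorem softmax_tv_bound (N : ℕ) (hN : 0 < N) (s s' : Fin N → ℝ) (Δ : ℝ)
    (hΔ : 0 ≤ Δ) (h : ∀ t, |s t - s' t| ≤ Δ)
    (a a' : Fin N → ℝ)
    (ha : ∀ t, a t = Real.exp (s t) / ∑ j, Real.exp (s j))
    (ha' : ∀ t, a' t = Real.exp (s' t) / ∑ j, Real.exp (s' j)) :
    (1 / 2) * ∑ t, |a t - a' t| ≤ Real.tanh Δ ∧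
      Real.tanh Δ = (Real.exp (2 * Δ) - 1) / (Real.exp (2 * Δ) + 1) := by
  refine ⟨?_, tanh_eq_aux Δ⟩
  set Z : ℝ := ∑ j, Real.exp (s j) with hZ
  set Z' : ℝ := ∑ j, Real.exp (s' j) with hZ'
  have hZpos : 0 < Z := Finset.sum_pos (fun j _ => Real.exp_pos _)
    (Finset.univ_nonempty_iff.mpr ⟨⟨0, hN⟩⟩)
  have hZ'pos : 0 < Z' := Finset.sum_pos (fun j _ => Real.exp_pos _)
    (Finset.univ_nonempty_iff.mpr ⟨⟨0, hN⟩⟩)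
  have hZle : Z ≤ Real.exp Δ * Z' := by
    rw [Finset.mul_sum]
    apply Finset.sum_le_sum
    intro j _
    rw [← Real.exp_add]
    apply Real.exp_le_exp.mpr
    have := abs_le.mp (h j)
    linarith [this.2]
  have hZ'le : Z' ≤ Real.exp Δ * Z := by
    rw [Finset.mul_sum]
    apply Finset.sum_le_sum
    intro j _
    rw [← Real.exp_add]
    apply Real.exp_le_exp.mpr
    have := abs_le.mp (h j)
    linarith [this.1]
  have hE : (1:ℝ) ≤ Real.exp Δ := Real.one_le_exp hΔ
  have hEpos : (0:ℝ) < Real.exp Δ := Real.exp_pos _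
  -- pointwise ratio bounds
  have key : ∀ t, |a t - a' t| ≤ (Real.exp Δ * Real.exp Δ - 1) * min (a t) (a' t) := by
    intro t
    have hat : a t = Real.exp (s t) / Z := ha t
    have hat' : a' t = Real.exp (s' t) / Z' := ha' t
    have hapos : 0 < a t := by rw [hat]; positivity
    have ha'pos : 0 < a' t := by rw [hat']; positivity
    have hr1 : a t ≤ Real.exp Δ * Real.exp Δ * a' t := by
      rw [hat, hat', div_le_iff₀ hZpos]
      have h1 : Real.exp (s t) ≤ Real.exp Δ * Real.exp (s' t) := by
        rw [← Real.exp_add]; apply Real.exp_le_exp.mpr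
        have := abs_le.mp (h t); linarith [this.2]
      calc Real.exp (s t) ≤ Real.exp Δ * Real.exp (s' t) := h1
        _ = Real.exp Δ * Real.exp Δ * (Real.exp (s' t) / Z') * Z' / Real.exp Δ := by
            field_simp
        _ ≤ Real.exp Δ * Real.exp Δ * (Real.exp (s' t) / Z') * (Real.exp Δ * Z) / Real.exp Δ := by
            apply div_le_div_of_nonneg_right ?_ hEpos.le |>.trans_eq rfl
            apply mul_le_mul_of_nonneg_left hZ'le
            positivity
        _ = Real.exp Δ * Real.exp Δ * (Real.exp (s' t) / Z') * Z := by
            field_simp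
    have hr2 : a' t ≤ Real.exp Δ * Real.exp Δ * a t := by
      rw [hat, hat', div_le_iff₀ hZ'pos]
      have h1 : Real.exp (s' t) ≤ Real.exp Δ * Real.exp (s t) := by
        rw [← Real.exp_add]; apply Real.exp_le_exp.mpr
        have := abs_le.mp (h t); linarith [(abs_le.mp (h t)).1]
      calc Real.exp (s' t) ≤ Real.exp Δ * Real.exp (s t) := h1
        _ = Real.exp Δ * Real.exp Δ * (Real.exp (s t) / Z) * Z / Real.exp Δ := by
            field_simp
        _ ≤ Real.exp Δ * Real.exp Δ * (Real.exp (s t) / Z) * (Real.exp Δ * Z') / Real.exp Δ := by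
            apply div_le_div_of_nonneg_right ?_ hEpos.le |>.trans_eq rfl
            apply mul_le_mul_of_nonneg_left hZle
            positivity
        _ = Real.exp Δ * Real.exp Δ * (Real.exp (s t) / Z) * Z' := by
            field_simp
    rcases le_total (a t) (a' t) with hle | hle
    · rw [abs_of_nonpos (by linarith), min_eq_left hle]
      nlinarith
    · rw [abs_of_nonneg (by linarith), min_eq_right hle]
      nlinarith
  have hsum1 : ∑ t, a t = 1 := by
    have : ∑ t, a t = (∑ t, Real.exp (s t)) / Z := by
      rw [Finset.sum_div]; exact Finset.sum_congr rfl (fun t _ => ha t)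
    rw [this, ← hZ, div_self hZpos.ne']
  have hsum1' : ∑ t, a' t = 1 := by
    have : ∑ t, a' t = (∑ t, Real.exp (s' t)) / Z' := by
      rw [Finset.sum_div]; exact Finset.sum_congr rfl (fun t _ => ha' t)
    rw [this, ← hZ', div_self hZ'pos.ne']
  have hmin : ∀ t, min (a t) (a' t) = (a t + a' t - |a t - a' t|) / 2 := by
    intro t
    rcases le_total (a t) (a' t) with hle | hle
    · rw [min_eq_left hle, abs_of_nonpos (by linarith)]; ring
    · rw [min_eq_right hle, abs_of_nonneg (by linarith)]; ring
  set D : ℝ := ∑ t, |a t - a' t| with hD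
  have hDbound : D ≤ (Real.exp Δ * Real.exp Δ - 1) * ((2 - D) / 2) := by
    calc D ≤ ∑ t, (Real.exp Δ * Real.exp Δ - 1) * min (a t) (a' t) :=
          Finset.sum_le_sum (fun t _ => key t)
      _ = (Real.exp Δ * Real.exp Δ - 1) * ∑ t, min (a t) (a' t) := by
          rw [Finset.mul_sum]
      _ = (Real.exp Δ * Real.exp Δ - 1) * ((2 - D) / 2) := by
          congr 1
          have : ∑ t, min (a t) (a' t) = ∑ t, (a t + a' t - |a t - a' t|) / 2 :=
            Finset.sum_congr rfl (fun t _ => hmin t)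
          rw [this, ← Finset.sum_div]
          simp only [Finset.sum_sub_distrib, Finset.sum_add_distrib, hsum1, hsum1', ← hD]
          ring
  have hDnn : 0 ≤ D := Finset.sum_nonneg (fun t _ => abs_nonneg _)
  rw [tanh_eq_aux, two_mul, Real.exp_add]
  rw [le_div_iff₀ (by positivity : (0:ℝ) < Real.exp Δ * Real.exp Δ + 1)]
  nlinarith [hDbound, hE]
end

section
/- Tail-restricted TV bound: let the token set be partitioned into F and T, let s' agree with s on F (s'_t = s_t for t∈F) and satisfy |s_t - s'_t| ≤ Δ on T. Let a = softmax(s), a' = softmax(s'), and α = Σ_{t∈T} a_t. Then TV(a, a') ≤ α·(e^{2Δ} - 1). -/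
open Real Finset

lemma abs_exp_sub_one_le' {d Δ : ℝ} (h : |d| ≤ Δ) : |Real.exp d - 1| ≤ Real.exp Δ - 1 := by
  rcases abs_le.mp h with ⟨h1, h2⟩
  rcases le_or_gt 1 (Real.exp d) with hd | hd
  · rw [abs_of_nonneg (by linarith)]
    have := Real.exp_le_exp.mpr h2; linarith
  · rw [abs_of_neg (by linarith)]
    have h3 : Real.exp (-Δ) ≤ Real.exp d := Real.exp_le_exp.mpr (by linarith)
    have h4 : Real.exp (-Δ) * Real.exp Δ = 1 := by
      rw [← Real.exp_add]; simp
    have h5 : 1 ≤ Real.exp Δ := Real.one_le_exp (le_trans (abs_nonneg d) h)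
    nlinarith [Real.exp_pos Δ, Real.exp_pos d]

/-- Tail-restricted TV bound: if the scores agree on `F` and are perturbed by
at most `Δ` on `T`, then `TV(a,a') ≤ α (e^{2Δ} - 1)` where `α` is the true
attention mass of `T`. -/
theorem tail_restricted_tv_bound (N : ℕ) (hN : 0 < N)
    (s s' : Fin N → ℝ) (Δ : ℝ) (hΔ : 0 ≤ Δ)
    (F T : Finset (Fin N)) (hFT : T = Fᶜ)
    (hF : ∀ t ∈ F, s' t = s t)
    (hT : ∀ t ∈ T, |s t - s' t| ≤ Δ)
    (a a' : Fin N → ℝ)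
    (ha : ∀ t, a t = Real.exp (s t) / ∑ j, Real.exp (s j))
    (ha' : ∀ t, a' t = Real.exp (s' t) / ∑ j, Real.exp (s' j))
    (α : ℝ) (hα : α = ∑ t ∈ T, a t) :
    (1 / 2) * ∑ t, |a t - a' t| ≤ α * (Real.exp (2 * Δ) - 1) := by
  have hne : Nonempty (Fin N) := Fin.pos_iff_nonempty.mp hN
  set Z : ℝ := ∑ j, Real.exp (s j) with hZdef
  set Z' : ℝ := ∑ j, Real.exp (s' j) with hZ'def
  set ZT : ℝ := ∑ t ∈ T, Real.exp (s t) with hZTdef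
  have hZ : 0 < Z := Finset.sum_pos (fun i _ => Real.exp_pos _) Finset.univ_nonempty
  have hZ' : 0 < Z' := Finset.sum_pos (fun i _ => Real.exp_pos _) Finset.univ_nonempty
  have hZT : 0 ≤ ZT := Finset.sum_nonneg (fun i _ => (Real.exp_pos _).le)
  have hexpΔ : 1 ≤ Real.exp Δ := Real.one_le_exp hΔ
  -- Step A: pointwise perturbation bound on T
  have hA : ∀ t ∈ T, |Real.exp (s' t) - Real.exp (s t)| ≤ (Real.exp Δ - 1) * Real.exp (s t) := by
    intro t ht
    have h1 : |s' t - s t| ≤ Δ := by rw [abs_sub_comm]; exact hT t ht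
    have h2 : Real.exp (s' t) - Real.exp (s t) = (Real.exp (s' t - s t) - 1) * Real.exp (s t) := by
      rw [sub_mul, ← Real.exp_add]; ring_nf
    rw [h2, abs_mul, abs_of_pos (Real.exp_pos _)]
    exact mul_le_mul_of_nonneg_right (abs_exp_sub_one_le' h1) (Real.exp_pos _).le
  -- splitting sums
  have hsplit : ∀ f : Fin N → ℝ, ∑ t, f t = ∑ t ∈ F, f t + ∑ t ∈ T, f t := by
    intro f; rw [hFT]; exact (Finset.sum_add_sum_compl F f).symm
  -- Step B : |Z' - Z| ≤ (e^Δ - 1) ZT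
  have hB : |Z' - Z| ≤ (Real.exp Δ - 1) * ZT := by
    have hFeq : ∑ t ∈ F, Real.exp (s' t) = ∑ t ∈ F, Real.exp (s t) :=
      Finset.sum_congr rfl (fun t ht => by rw [hF t ht])
    have hdiff : Z' - Z = ∑ t ∈ T, (Real.exp (s' t) - Real.exp (s t)) := by
      rw [hZ'def, hZdef, hsplit (fun j => Real.exp (s' j)), hsplit (fun j => Real.exp (s j)),
        hFeq, Finset.sum_sub_distrib]
      ring
    rw [hdiff, hZTdef, Finset.mul_sum]
    exact le_trans (Finset.abs_sum_le_sum_abs _ _) (Finset.sum_le_sum (fun t ht => by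
      rw [mul_comm]
      exact le_trans (hA t ht) (by rw [mul_comm])))
  -- Step C : e^{-Δ} Z ≤ Z'
  have hC : Real.exp (-Δ) * Z ≤ Z' := by
    rw [hZdef, hZ'def, Finset.mul_sum]
    apply Finset.sum_le_sum
    intro t _
    by_cases ht : t ∈ F
    · rw [hF t ht, ← Real.exp_add]
      exact Real.exp_le_exp.mpr (by linarith)
    · have htT : t ∈ T := by rw [hFT]; exact Finset.mem_compl.mpr ht
      have := abs_le.mp (hT t htT)
      rw [← Real.exp_add]
      exact Real.exp_le_exp.mpr (by linarith)
  -- Step D : ZT = α Z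
  have hD : ZT = α * Z := by
    rw [hα]
    have : ∑ t ∈ T, a t = ∑ t ∈ T, Real.exp (s t) / Z :=
      Finset.sum_congr rfl (fun t _ => ha t)
    rw [this, ← Finset.sum_div, hZTdef]
    field_simp
  have hαnn : 0 ≤ α := by
    have := hD
    nlinarith
  -- key numerator bound
  have key : ∑ t, |Real.exp (s t) * Z' - Real.exp (s' t) * Z| ≤
      2 * (Real.exp Δ - 1) * ZT * Z := by
    have hterm : ∀ t ∈ Finset.univ, |Real.exp (s t) * Z' - Real.exp (s' t) * Z| ≤
        Real.exp (s t) * |Z' - Z| +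
          (if t ∈ T then (Real.exp Δ - 1) * Real.exp (s t) * Z else 0) := by
      intro t _
      by_cases ht : t ∈ T
      · simp only [ht, if_true]
        have heq : Real.exp (s t) * Z' - Real.exp (s' t) * Z =
            Real.exp (s t) * (Z' - Z) + (Real.exp (s t) - Real.exp (s' t)) * Z := by ring
        rw [heq]
        refine le_trans (abs_add_le _ _) ?_
        rw [abs_mul, abs_mul, abs_of_pos (Real.exp_pos _), abs_of_pos hZ]
        have : |Real.exp (s t) - Real.exp (s' t)| ≤ (Real.exp Δ - 1) * Real.exp (s t) := by
          rw [abs_sub_comm]; exact hA t ht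
        nlinarith
      · have htF : t ∈ F := by
          by_contra hc
          exact ht (by rw [hFT]; exact Finset.mem_compl.mpr hc)
        simp only [ht, if_false]
        rw [hF t htF, ← mul_sub, abs_mul, abs_of_pos (Real.exp_pos _), abs_sub_comm]
        simp
    refine le_trans (Finset.sum_le_sum hterm) ?_
    rw [Finset.sum_add_distrib, ← Finset.sum_mul, Finset.sum_ite_mem,
      Finset.univ_inter, ← hZdef, ← Finset.sum_mul, ← Finset.mul_sum, ← hZTdef]
    nlinarith [abs_nonneg (Z' - Z)]
  -- rewrite the TV sum
  have hrw : ∑ t, |a t - a' t| =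
      (∑ t, |Real.exp (s t) * Z' - Real.exp (s' t) * Z|) / (Z * Z') := by
    rw [Finset.sum_div]
    refine Finset.sum_congr rfl (fun t _ => ?_)
    rw [ha t, ha' t, div_sub_div _ _ (ne_of_gt hZ) (ne_of_gt hZ'),
      abs_div, abs_of_pos (mul_pos hZ hZ')]
    ring_nf
  rw [hrw]
  have he2 : Real.exp (2 * Δ) = Real.exp Δ * Real.exp Δ := by
    rw [← Real.exp_add]; ring_nf
  have heneg : Real.exp (-Δ) * Real.exp Δ = 1 := by rw [← Real.exp_add]; simp
  have heneg1 : Real.exp (-Δ) ≤ 1 := Real.exp_le_one_iff.mpr (by linarith)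
  have h2 : (∑ t, |Real.exp (s t) * Z' - Real.exp (s' t) * Z|) / (Z * Z') ≤
      2 * (Real.exp Δ - 1) * ZT * Z / (Z * Z') :=
    (div_le_div_iff_of_pos_right (mul_pos hZ hZ')).mpr key
  have h3 : (1/2 : ℝ) * (2 * (Real.exp Δ - 1) * ZT * Z / (Z * Z')) =
      (Real.exp Δ - 1) * α * Z / Z' := by
    rw [hD]; field_simp
  have h4 : (Real.exp Δ - 1) * α * Z / Z' ≤ α * (Real.exp (2 * Δ) - 1) := by
    rw [div_le_iff₀ hZ']
    have h5 : α * (Real.exp (2 * Δ) - 1) * (Real.exp (-Δ) * Z) ≤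
        α * (Real.exp (2 * Δ) - 1) * Z' := by
      apply mul_le_mul_of_nonneg_left hC
      have : 1 ≤ Real.exp (2 * Δ) := Real.one_le_exp (by linarith)
      have := mul_nonneg hαnn (sub_nonneg.mpr this)
      linarith
    have h6 : α * (Real.exp (2 * Δ) - 1) * (Real.exp (-Δ) * Z) =
        α * Z * (Real.exp Δ - Real.exp (-Δ)) := by
      linear_combination α * Z * Real.exp (-Δ) * he2 + α * Z * Real.exp Δ * heneg
    have h7 : 0 ≤ α * Z * (1 - Real.exp (-Δ)) :=
      mul_nonneg (mul_nonneg hαnn hZ.le) (sub_nonneg.mpr heneg1)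
    nlinarith [h5, h6, h7]
  calc (1/2 : ℝ) * ((∑ t, |Real.exp (s t) * Z' - Real.exp (s' t) * Z|) / (Z * Z'))
      ≤ (1/2 : ℝ) * (2 * (Real.exp Δ - 1) * ZT * Z / (Z * Z')) := by linarith
    _ = (Real.exp Δ - 1) * α * Z / Z' := h3
    _ ≤ α * (Real.exp (2 * Δ) - 1) := h4
end

section
/- FP16-set TV contribution bound: with the setting of the tail-restricted TV lemma (s' = s on F, |s_t - s'_t| ≤ Δ on T, a = softmax(s), a' = softmax(s'), α = Σ_{t∈T} a_t), it holds that Σ_{t∈F} |a_t - a'_t| ≤ α·(e^{Δ} - 1). -/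
open Real Finset

/-- FP16-set TV contribution bound: the unperturbed tokens contribute at most
`α (e^{Δ} - 1)` to the ℓ1 distance between the two softmax distributions. -/
theorem fp16_set_contribution_bound (N : ℕ) (hN : 0 < N)
    (s s' : Fin N → ℝ) (Δ : ℝ) (hΔ : 0 ≤ Δ)
    (F T : Finset (Fin N)) (hFT : T = Fᶜ)
    (hF : ∀ t ∈ F, s' t = s t)
    (hT : ∀ t ∈ T, |s t - s' t| ≤ Δ)
    (a a' : Fin N → ℝ)
    (ha : ∀ t, a t = Real.exp (s t) / ∑ j, Real.exp (s j))
    (ha' : ∀ t, a' t = Real.exp (s' t) / ∑ j, Real.exp (s' j))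
    (α : ℝ) (hα : α = ∑ t ∈ T, a t) :
    ∑ t ∈ F, |a t - a' t| ≤ α * (Real.exp Δ - 1) := by
  haveI : Nonempty (Fin N) := ⟨⟨0, hN⟩⟩
  set Z := ∑ j, Real.exp (s j) with hZdef
  set Z' := ∑ j, Real.exp (s' j) with hZ'def
  have hZ : 0 < Z := Finset.sum_pos (fun j _ => Real.exp_pos _) univ_nonempty
  have hZ' : 0 < Z' := Finset.sum_pos (fun j _ => Real.exp_pos _) univ_nonempty
  have hptw : ∀ t ∈ T, |Real.exp (s' t) - Real.exp (s t)| ≤ Real.exp (s t) * (Real.exp Δ - 1) := by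
    intro t ht
    have hx : |s' t - s t| ≤ Δ := by rw [abs_sub_comm]; exact hT t ht
    rcases abs_le.mp hx with ⟨hlo, hhi⟩
    have hfac : Real.exp (s' t) - Real.exp (s t)
        = Real.exp (s t) * (Real.exp (s' t - s t) - 1) := by
      rw [mul_sub, ← Real.exp_add]; ring_nf
    rw [hfac, abs_mul, abs_of_pos (Real.exp_pos _)]
    apply mul_le_mul_of_nonneg_left _ (Real.exp_pos _).le
    rcases le_or_gt 1 (Real.exp (s' t - s t)) with hc | hc
    · rw [abs_of_nonneg (by linarith)]
      have := Real.exp_le_exp.mpr hhi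
      linarith
    · rw [abs_of_neg (by linarith)]
      have h2 : Real.exp (-Δ) ≤ Real.exp (s' t - s t) := Real.exp_le_exp.mpr (by linarith)
      have h3 := Real.add_one_le_exp Δ
      have h4 := Real.add_one_le_exp (-Δ)
      linarith
  have hsplit : ∀ f : Fin N → ℝ, ∑ j, f j = ∑ j ∈ F, f j + ∑ j ∈ T, f j := by
    intro f; rw [hFT]; exact (Finset.sum_add_sum_compl F f).symm
  have hA : ∑ j ∈ F, Real.exp (s' j) = ∑ j ∈ F, Real.exp (s j) :=
    Finset.sum_congr rfl fun j hj => by rw [hF j hj]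
  have hZeq : Z = ∑ j ∈ F, Real.exp (s j) + ∑ j ∈ T, Real.exp (s j) := hsplit _
  have hZ'eq : Z' = ∑ j ∈ F, Real.exp (s' j) + ∑ j ∈ T, Real.exp (s' j) := hsplit _
  have hZZ : Z' - Z = ∑ t ∈ T, (Real.exp (s' t) - Real.exp (s t)) := by
    rw [Finset.sum_sub_distrib]; linarith
  have hZdiff : |Z' - Z| ≤ (∑ t ∈ T, Real.exp (s t)) * (Real.exp Δ - 1) := by
    rw [hZZ]
    calc |∑ t ∈ T, (Real.exp (s' t) - Real.exp (s t))|
        ≤ ∑ t ∈ T, |Real.exp (s' t) - Real.exp (s t)| := Finset.abs_sum_le_sum_abs _ _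
      _ ≤ ∑ t ∈ T, Real.exp (s t) * (Real.exp Δ - 1) := Finset.sum_le_sum hptw
      _ = (∑ t ∈ T, Real.exp (s t)) * (Real.exp Δ - 1) := by rw [Finset.sum_mul]
  have hterm : ∀ t ∈ F, |a t - a' t| = Real.exp (s t) * (|Z' - Z| / (Z * Z')) := by
    intro t ht
    rw [ha, ha', hF t ht,
      div_sub_div _ _ hZ.ne' hZ'.ne', abs_div, abs_of_pos (mul_pos hZ hZ'),
      (show Real.exp (s t) * Z' - Z * Real.exp (s t) = Real.exp (s t) * (Z' - Z) by ring),
      abs_mul, abs_of_pos (Real.exp_pos _)]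
    ring
  have hsum : ∑ t ∈ F, |a t - a' t|
      = (∑ t ∈ F, Real.exp (s t)) * (|Z' - Z| / (Z * Z')) := by
    rw [Finset.sum_congr rfl hterm, ← Finset.sum_mul]
  have hFle : ∑ t ∈ F, Real.exp (s t) ≤ Z' := by
    rw [← hA, hZ'def]
    exact Finset.sum_le_sum_of_subset_of_nonneg (Finset.subset_univ F)
      (fun _ _ _ => (Real.exp_pos _).le)
  have hαeq : α = (∑ t ∈ T, Real.exp (s t)) / Z := by
    rw [hα]
    simp only [ha]
    rw [← Finset.sum_div]
  have heΔ : (0:ℝ) ≤ Real.exp Δ - 1 := by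
    have := Real.one_le_exp hΔ; linarith
  rw [hsum]
  calc (∑ t ∈ F, Real.exp (s t)) * (|Z' - Z| / (Z * Z'))
      ≤ Z' * (((∑ t ∈ T, Real.exp (s t)) * (Real.exp Δ - 1)) / (Z * Z')) := by
        gcongr <;>
          first
            | exact hFle
            | exact hZdiff
            | positivity
    _ = α * (Real.exp Δ - 1) := by
        rw [hαeq]; field_simp
end
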